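/- For all sufficiently large x, the sum over primes r with x^{1/2} log x < r ≤ 2 x^{1/2} log x and over primes p1 with x < p1 ≤ 2x of the square of the discrepancy ( #{primes p : x < p ≤ 2x, p ≡ -p1 (mod r)} - (1/r) * #{primes p : x < p ≤ 2x} )^2 is O(x^2 / log x). -/

import Mathlib

open Finset Real MeasureTheory intervalIntegral

noncomputable def cc (ν : ℝ) : ℂ := 2 * Real.pi * Complex.I * ν

noncomputable def ee (ν t : ℝ) : ℂ := Complex.exp (cc ν * t)

lemma cc_ne_zero {ν : ℝ} (hν : ν ≠ 0) : cc ν ≠ 0 := by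
  simp [cc, Real.pi_ne_zero, Complex.I_ne_zero, hν, Complex.ofReal_ne_zero]

lemma ee_mul (ν μ t : ℝ) : ee ν t * ee μ t = ee (ν + μ) t := by
  rw [ee, ee, ee, ← Complex.exp_add]
  congr 1
  simp [cc]
  push_cast
  ring

lemma conj_ee (ν t : ℝ) : (starRingEnd ℂ) (ee ν t) = ee (-ν) t := by
  rw [ee, ee, ← Complex.exp_conj]
  congr 1
  simp only [cc, map_mul, Complex.conj_I, Complex.conj_ofReal, map_ofNat]
  push_cast
  ring

lemma ee_zero (ν : ℝ) : ee ν 0 = 1 := by simp [ee]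

lemma ee_int_one (k : ℤ) : ee (k : ℝ) 1 = 1 := by
  rw [ee]
  push_cast [cc]
  rw [show 2 * (Real.pi:ℂ) * Complex.I * (k:ℂ) * 1 = (k:ℂ) * (2 * Real.pi * Complex.I) by ring]
  exact Complex.exp_int_mul_two_pi_mul_I k

lemma hasDerivAt_ee (ν t : ℝ) : HasDerivAt (fun u : ℝ => ee ν u) (cc ν * ee ν t) t := by
  have h1 : HasDerivAt (fun u : ℝ => cc ν * (u : ℂ)) (cc ν) t := by
    simpa only [mul_one, id] using ((hasDerivAt_id (t : ℂ)).const_mul (cc ν)).comp_ofReal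
  simpa [ee, mul_comm, Function.comp_def] using (Complex.hasDerivAt_exp (cc ν * t)).comp t h1

lemma continuous_ee (ν : ℝ) : Continuous (fun t : ℝ => ee ν t) :=
  Complex.continuous_exp.comp (continuous_const.mul Complex.continuous_ofReal)

lemma integral_ee (k : ℤ) : (∫ t in (0:ℝ)..1, ee (k:ℝ) t) = if k = 0 then 1 else 0 := by
  by_cases hk : k = 0
  · simp [hk, ee, cc]
  · rw [if_neg hk]
    have hc : cc (k:ℝ) ≠ 0 := cc_ne_zero (by exact_mod_cast hk)
    rw [show (fun t : ℝ => ee (k:ℝ) t) = fun t : ℝ => Complex.exp (cc (k:ℝ) * t) from rfl]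
    rw [integral_exp_mul_complex hc]
    have h1 : Complex.exp (cc (k:ℝ) * 1) = 1 := by
      simpa [ee] using ee_int_one k
    simp only [cc, mul_one] at h1
    push_cast at h1
    simp [h1, ee, cc]

lemma continuous_trig (A : Finset ℕ) (w : ℕ → ℂ) :
    Continuous (fun t : ℝ => ∑ n ∈ A, w n * ee n t) :=
  continuous_finset_sum _ fun n _ => continuous_const.mul (continuous_ee n)

lemma mul_conj_expand (A : Finset ℕ) (w : ℕ → ℂ) (t : ℝ) :
    (∑ n ∈ A, w n * ee n t) * (starRingEnd ℂ) (∑ n ∈ A, w n * ee n t)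
      = ∑ n ∈ A, ∑ m ∈ A, (w n * (starRingEnd ℂ) (w m)) * ee ((n:ℝ) - m) t := by
  rw [map_sum, Finset.sum_mul_sum]
  refine Finset.sum_congr rfl fun n _ => Finset.sum_congr rfl fun m _ => ?_
  rw [map_mul, conj_ee]
  calc w n * ee n t * ((starRingEnd ℂ) (w m) * ee (-(m:ℝ)) t)
      = (w n * (starRingEnd ℂ) (w m)) * (ee (n:ℝ) t * ee (-(m:ℝ)) t) := by ring
    _ = (w n * (starRingEnd ℂ) (w m)) * ee ((n:ℝ) - m) t := by
        rw [ee_mul, sub_eq_add_neg]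

lemma L2_int (A : Finset ℕ) (w : ℕ → ℂ) :
    (∫ t in (0:ℝ)..1, Complex.normSq (∑ n ∈ A, w n * ee n t)) =
      ∑ n ∈ A, Complex.normSq (w n) := by
  have hexp := mul_conj_expand A w
  have key : (∫ t in (0:ℝ)..1,
      ((∑ n ∈ A, w n * ee n t) * (starRingEnd ℂ) (∑ n ∈ A, w n * ee n t))) =
      ∑ n ∈ A, (w n * (starRingEnd ℂ) (w n)) := by
    rw [intervalIntegral.integral_congr (g := fun t => ∑ n ∈ A, ∑ m ∈ A,
      (w n * (starRingEnd ℂ) (w m)) * ee ((n:ℝ) - m) t) (fun t _ => hexp t)]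
    rw [intervalIntegral.integral_finset_sum
      (f := fun n t => ∑ m ∈ A, (w n * (starRingEnd ℂ) (w m)) * ee ((n:ℝ) - m) t)
      (fun n _ => (continuous_finset_sum _ (fun m _ =>
        continuous_const.mul (continuous_ee _))).intervalIntegrable 0 1)]
    have hinner : ∀ n ∈ A, (∫ t in (0:ℝ)..1, ∑ m ∈ A,
        (w n * (starRingEnd ℂ) (w m)) * ee ((n:ℝ) - m) t)
        = w n * (starRingEnd ℂ) (w n) := by
      intro n hn
      rw [intervalIntegral.integral_finset_sum
        (f := fun m t => (w n * (starRingEnd ℂ) (w m)) * ee ((n:ℝ) - m) t)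
        (fun m _ => (continuous_const.mul (continuous_ee _)).intervalIntegrable 0 1)]
      have : ∀ m ∈ A, (∫ t in (0:ℝ)..1, (w n * (starRingEnd ℂ) (w m)) * ee ((n:ℝ) - m) t)
          = if m = n then w n * (starRingEnd ℂ) (w n) else 0 := by
        intro m _
        rw [intervalIntegral.integral_const_mul]
        have hcast : ((n:ℝ) - m) = (((n:ℤ) - m : ℤ) : ℝ) := by push_cast; ring
        rw [hcast, integral_ee]
        by_cases h : m = n
        · simp [h]
        · rw [if_neg h, if_neg (by omega), mul_zero]
      rw [Finset.sum_congr rfl this, Finset.sum_ite_eq' A n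
        (fun _ => w n * (starRingEnd ℂ) (w n)), if_pos hn]
    rw [Finset.sum_congr rfl hinner]
  have h2 : ∀ t : ℝ, ((Complex.normSq (∑ n ∈ A, w n * ee n t) : ℝ) : ℂ)
      = (∑ n ∈ A, w n * ee n t) * (starRingEnd ℂ) (∑ n ∈ A, w n * ee n t) :=
    fun t => (Complex.mul_conj _).symm
  rw [← intervalIntegral.integral_congr (fun t _ => h2 t)] at key
  rw [intervalIntegral.integral_ofReal] at key
  have h3 : (∑ n ∈ A, (w n * (starRingEnd ℂ) (w n)))
      = ((∑ n ∈ A, Complex.normSq (w n) : ℝ) : ℂ) := by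
    push_cast
    exact Finset.sum_congr rfl fun n _ => Complex.mul_conj _
  rw [h3] at key
  exact_mod_cast key

lemma ee_pow (ν : ℝ) (h r : ℕ) (hr : 0 < r) :
    ee ν ((h:ℝ)/r) = (ee ν (1/(r:ℝ))) ^ h := by
  clear hr
  rw [ee, ee, ← Complex.exp_nat_mul]
  congr 1
  push_cast
  ring

lemma sum_ee_roots (k : ℤ) (r : ℕ) (hr : 0 < r) :
    (∑ h ∈ Finset.range r, ee (k:ℝ) ((h:ℝ)/r)) = if (r:ℤ) ∣ k then (r:ℂ) else 0 := by
  have hz : ∀ h ∈ Finset.range r, ee (k:ℝ) ((h:ℝ)/r) = (ee (k:ℝ) (1/(r:ℝ))) ^ h :=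
    fun h _ => ee_pow _ h r hr
  rw [Finset.sum_congr rfl hz]
  set z : ℂ := ee (k:ℝ) (1/(r:ℝ)) with hzdef
  have hzr : z ^ r = 1 := by
    rw [hzdef, ee, ← Complex.exp_nat_mul]
    have hr0 : (r:ℂ) ≠ 0 := by exact_mod_cast hr.ne'
    have : (r:ℂ) * (cc (k:ℝ) * ((1:ℝ)/(r:ℝ) : ℝ)) = cc (k:ℝ) * ((1:ℝ):ℝ) := by
      simp only [cc]
      push_cast
      field_simp
    rw [this]
    exact ee_int_one k
  by_cases hdvd : (r:ℤ) ∣ k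
  · rw [if_pos hdvd]
    obtain ⟨j, hj⟩ := hdvd
    have hz1 : z = 1 := by
      rw [hzdef, ee]
      have : cc (k:ℝ) * ((1:ℝ)/(r:ℝ) : ℝ) = (j:ℂ) * (2 * Real.pi * Complex.I) := by
        simp only [cc]
        have hk : (k:ℂ) = (r:ℂ) * j := by exact_mod_cast hj
        have hr0 : (r:ℂ) ≠ 0 := by exact_mod_cast hr.ne'
        push_cast
        rw [hk]
        field_simp
      rw [this]
      exact Complex.exp_int_mul_two_pi_mul_I j
    simp [hz1]
  · have hz1 : z ≠ 1 := by
      intro hz1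
      rw [hzdef, ee, Complex.exp_eq_one_iff] at hz1
      obtain ⟨j, hj⟩ := hz1
      simp only [cc] at hj
      have hr0 : (r:ℂ) ≠ 0 := by exact_mod_cast hr.ne'
      have hI : (2 * (Real.pi:ℂ) * Complex.I) ≠ 0 := by
        simp [Real.pi_ne_zero, Complex.I_ne_zero, Complex.ofReal_ne_zero]
      have hc : (k:ℂ) = (j:ℂ) * r := by
        push_cast at hj
        field_simp at hj
        have h2 : (k:ℂ) * (2 * (Real.pi:ℂ) * Complex.I) = (j:ℂ) * r * (2 * (Real.pi:ℂ) * Complex.I) := by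
          linear_combination (2 * (Real.pi:ℂ) * Complex.I) * hj
        exact mul_right_cancel₀ hI h2
      have hz2 : k = j * r := by exact_mod_cast hc
      exact hdvd ⟨j, by rw [hz2]; ring⟩
    rw [geom_sum_eq hz1, hzr, if_neg hdvd]
    simp

lemma disc_parseval (A : Finset ℕ) (r : ℕ) (hr : 0 < r) :
    ∑ h ∈ Finset.range r, Complex.normSq (∑ n ∈ A, ee (n:ℝ) ((h:ℝ)/r)) =
      (r:ℝ) * ∑ a ∈ Finset.range r, (((A.filter fun n => n % r = a).card : ℝ))^2 := by
  have key : (∑ h ∈ Finset.range r, ((∑ n ∈ A, ee (n:ℝ) ((h:ℝ)/r)) *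
      (starRingEnd ℂ) (∑ n ∈ A, ee (n:ℝ) ((h:ℝ)/r)))) =
      (r:ℂ) * ∑ a ∈ Finset.range r, (((A.filter fun n => n % r = a).card : ℂ))^2 := by
    have h1 : ∀ h ∈ Finset.range r, (∑ n ∈ A, ee (n:ℝ) ((h:ℝ)/r)) *
        (starRingEnd ℂ) (∑ n ∈ A, ee (n:ℝ) ((h:ℝ)/r))
        = ∑ n ∈ A, ∑ m ∈ A, ee ((n:ℝ) - m) ((h:ℝ)/r) := by
      intro h _
      simpa using mul_conj_expand A (fun _ => 1) ((h:ℝ)/r)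
    rw [Finset.sum_congr rfl h1, Finset.sum_comm]
    have h2 : ∀ n ∈ A, (∑ h ∈ Finset.range r, ∑ m ∈ A, ee ((n:ℝ) - m) ((h:ℝ)/r))
        = (r:ℂ) * ((A.filter fun m => m % r = n % r).card : ℂ) := by
      intro n _
      rw [Finset.sum_comm]
      have h3 : ∀ m ∈ A, (∑ h ∈ Finset.range r, ee ((n:ℝ) - m) ((h:ℝ)/r))
          = if m % r = n % r then (r:ℂ) else 0 := by
        intro m _
        have hcast : ((n:ℝ) - m) = (((n:ℤ) - m : ℤ):ℝ) := by push_cast; ring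
        rw [hcast, sum_ee_roots _ r hr]
        congr 1
        rw [eq_iff_iff]
        exact ⟨fun hd => (Nat.modEq_iff_dvd).mpr hd, fun hmod => (Nat.modEq_iff_dvd).mp hmod⟩
      rw [Finset.sum_congr rfl h3, ← Finset.sum_filter, Finset.sum_const, nsmul_eq_mul,
        mul_comm]
    rw [Finset.sum_congr rfl h2, ← Finset.mul_sum]
    congr 1
    have hmaps : ∀ n ∈ A, n % r ∈ Finset.range r :=
      fun n _ => Finset.mem_range.mpr (Nat.mod_lt n hr)
    rw [← Finset.sum_fiberwise_of_maps_to hmaps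
      (fun n => ((A.filter fun m => m % r = n % r).card : ℂ))]
    refine Finset.sum_congr rfl fun a _ => ?_
    have hfib : ∀ n ∈ A.filter (fun n => n % r = a),
        ((A.filter fun m => m % r = n % r).card : ℂ)
          = ((A.filter fun m => m % r = a).card : ℂ) := by
      intro n hn
      rw [(Finset.mem_filter.mp hn).2]
    rw [Finset.sum_congr rfl hfib, Finset.sum_const, nsmul_eq_mul, sq]
  have hl : ((∑ h ∈ Finset.range r, Complex.normSq (∑ n ∈ A, ee (n:ℝ) ((h:ℝ)/r)) : ℝ) : ℂ)
      = ∑ h ∈ Finset.range r, ((∑ n ∈ A, ee (n:ℝ) ((h:ℝ)/r)) *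
        (starRingEnd ℂ) (∑ n ∈ A, ee (n:ℝ) ((h:ℝ)/r))) := by
    push_cast
    exact Finset.sum_congr rfl fun h _ => (Complex.mul_conj _).symm
  rw [key] at hl
  exact_mod_cast hl

lemma sobolev {g gd : ℝ → ℝ} (hg : ∀ u, HasDerivAt g (gd u) u)
    (hgc : Continuous g) (hgdc : Continuous gd) {a b t : ℝ}
    (hab : a < b) (hta : a ≤ t) (htb : t ≤ b) :
    g t ≤ (b - a)⁻¹ * (∫ u in a..b, g u) + ∫ u in a..b, |gd u| := by
  have habs : ∀ u ∈ Set.Icc a b, g t ≤ g u + ∫ v in a..b, |gd v| := by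
    intro u hu
    have hftc : (∫ v in u..t, gd v) = g t - g u :=
      intervalIntegral.integral_eq_sub_of_hasDerivAt (fun v _ => hg v)
        (hgdc.intervalIntegrable u t)
    have h1 : g t - g u ≤ |∫ v in u..t, gd v| := by
      rw [hftc] at *
      exact le_abs_self _
    have h2 : |∫ v in u..t, gd v| ≤ ∫ v in a..b, |gd v| := by
      rcases le_total u t with h | h
      · calc |∫ v in u..t, gd v| ≤ ∫ v in u..t, |gd v| :=
              intervalIntegral.abs_integral_le_integral_abs h
          _ ≤ ∫ v in a..b, |gd v| :=
              intervalIntegral.integral_mono_interval hu.1 h htb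
                (Filter.Eventually.of_forall fun v => abs_nonneg _)
                ((hgdc.abs).intervalIntegrable a b)
      · rw [intervalIntegral.integral_symm]
        rw [abs_neg]
        calc |∫ v in t..u, gd v| ≤ ∫ v in t..u, |gd v| :=
              intervalIntegral.abs_integral_le_integral_abs h
          _ ≤ ∫ v in a..b, |gd v| :=
              intervalIntegral.integral_mono_interval hta h hu.2
                (Filter.Eventually.of_forall fun v => abs_nonneg _)
                ((hgdc.abs).intervalIntegrable a b)
    linarith
  have hint : (b - a) * g t ≤ (∫ u in a..b, g u) + (b - a) * ∫ v in a..b, |gd v| := by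
    have h3 : (∫ u in a..b, g t) ≤ ∫ u in a..b, (g u + ∫ v in a..b, |gd v|) := by
      apply intervalIntegral.integral_mono_on hab.le
        (intervalIntegrable_const)
        ((hgc.add continuous_const).intervalIntegrable a b)
      exact habs
    rw [intervalIntegral.integral_const] at h3
    rw [intervalIntegral.integral_add (hgc.intervalIntegrable a b)
      (intervalIntegrable_const)] at h3
    rw [intervalIntegral.integral_const] at h3
    simpa [smul_eq_mul] using h3
  have hba : 0 < b - a := by linarith
  have hmul := mul_le_mul_of_nonneg_left hint (le_of_lt (inv_pos.mpr hba))
  calc g t = (b-a)⁻¹ * ((b-a) * g t) := by field_simp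
    _ ≤ (b-a)⁻¹ * ((∫ u in a..b, g u) + (b - a) * ∫ v in a..b, |gd v|) := hmul
    _ = (b - a)⁻¹ * (∫ u in a..b, g u) + ∫ u in a..b, |gd u| := by field_simp

lemma sum_integral_le {f : ℝ → ℝ} (hf : Continuous f) (hf0 : ∀ u, 0 ≤ f u)
    (T : Finset ℝ) (η : ℝ) (hη : 0 < η)
    (hT1 : ∀ t ∈ T, η ≤ t ∧ t + η ≤ 1)
    (hT2 : ∀ t ∈ T, ∀ s ∈ T, t ≠ s → 2*η ≤ |t - s|) :
    ∑ t ∈ T, (∫ u in (t-η)..(t+η), f u) ≤ ∫ u in (0:ℝ)..1, f u := by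
  have heq : ∀ t ∈ T, (∫ u in (t-η)..(t+η), f u) = ∫ u in Set.Ioc (t-η) (t+η), f u :=
    fun t _ => intervalIntegral.integral_of_le (by linarith)
  rw [Finset.sum_congr rfl heq]
  have hdisj : Set.Pairwise (↑T) (Function.onFun Disjoint
      (fun t : ℝ => Set.Ioc (t-η) (t+η))) := by
    intro a ha b hb hab
    refine Set.Ioc_disjoint_Ioc.mpr ?_
    have h2 := hT2 a (by exact_mod_cast ha) b (by exact_mod_cast hb) hab
    rcases abs_cases (a - b) with ⟨h3, _⟩ | ⟨h3, _⟩
    · calc min (a+η) (b+η) ≤ b + η := min_le_right _ _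
        _ ≤ a - η := by rw [h3] at h2; linarith
        _ ≤ max (a-η) (b-η) := le_max_left _ _
    · calc min (a+η) (b+η) ≤ a + η := min_le_left _ _
        _ ≤ b - η := by rw [h3] at h2; linarith
        _ ≤ max (a-η) (b-η) := le_max_right _ _
  rw [← MeasureTheory.integral_biUnion_finset T (fun t _ => measurableSet_Ioc) hdisj
    (fun t _ => hf.integrableOn_Ioc)]
  have hsub : (⋃ t ∈ T, Set.Ioc (t-η) (t+η)) ⊆ Set.Ioc (0:ℝ) 1 := by
    refine Set.iUnion₂_subset fun t ht => ?_
    have := hT1 t ht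
    exact Set.Ioc_subset_Ioc (by linarith [this.1]) (by linarith [this.2])
  have hle : (∫ u in (⋃ t ∈ T, Set.Ioc (t-η) (t+η)), f u) ≤ ∫ u in Set.Ioc (0:ℝ) 1, f u :=
    MeasureTheory.setIntegral_mono_set hf.integrableOn_Ioc
      (Filter.Eventually.of_forall hf0) (Filter.Eventually.of_forall hsub)
  rw [intervalIntegral.integral_of_le (by norm_num : (0:ℝ) ≤ 1)]
  exact hle

lemma normSq_cc (ν : ℝ) : Complex.normSq (cc ν) = (2*Real.pi*ν)^2 := by
  simp [cc, map_mul, Complex.normSq_ofReal]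
  ring

lemma gallagher (A : Finset ℕ) (N : ℕ) (hA : ∀ n ∈ A, n ≤ N) (T : Finset ℝ) (δ : ℝ)
    (hδ : 0 < δ)
    (hT1 : ∀ t ∈ T, δ/2 ≤ t ∧ t + δ/2 ≤ 1)
    (hT2 : ∀ t ∈ T, ∀ s ∈ T, t ≠ s → δ ≤ |t - s|) :
    ∑ t ∈ T, Complex.normSq (∑ n ∈ A, ee (n:ℝ) t)
      ≤ (δ⁻¹ + 4*Real.pi*N + 1) * A.card := by
  set S : ℝ → ℂ := fun u => ∑ n ∈ A, ee (n:ℝ) u with hSdef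
  set D : ℝ → ℂ := fun u => ∑ n ∈ A, cc (n:ℝ) * ee (n:ℝ) u with hDdef
  have hS : ∀ u, HasDerivAt S (D u) u :=
    fun u => HasDerivAt.fun_sum (fun n _ => hasDerivAt_ee (n:ℝ) u)
  have hSc : Continuous S := continuous_finset_sum _ fun n _ => continuous_ee _
  have hDc : Continuous D := continuous_finset_sum _ fun n _ =>
    continuous_const.mul (continuous_ee _)
  set g : ℝ → ℝ := fun u => (S u).re * (S u).re + (S u).im * (S u).im with hgdef
  set gd : ℝ → ℝ := fun u =>
    ((D u).re * (S u).re + (S u).re * (D u).re) +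
    ((D u).im * (S u).im + (S u).im * (D u).im) with hgddef
  have hgc : Continuous g := by
    apply Continuous.add
    · exact (Complex.continuous_re.comp hSc).mul (Complex.continuous_re.comp hSc)
    · exact (Complex.continuous_im.comp hSc).mul (Complex.continuous_im.comp hSc)
  have hgdc : Continuous gd := by
    apply Continuous.add
    · exact ((Complex.continuous_re.comp hDc).mul (Complex.continuous_re.comp hSc)).add
        ((Complex.continuous_re.comp hSc).mul (Complex.continuous_re.comp hDc))
    · exact ((Complex.continuous_im.comp hDc).mul (Complex.continuous_im.comp hSc)).add
        ((Complex.continuous_im.comp hSc).mul (Complex.continuous_im.comp hDc))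
  have hg' : ∀ u, HasDerivAt g (gd u) u := by
    intro u
    have hre : HasDerivAt (fun v => (S v).re) ((D u).re) u :=
      (Complex.reCLM.hasFDerivAt.comp_hasDerivAt u (hS u))
    have him : HasDerivAt (fun v => (S v).im) ((D u).im) u :=
      (Complex.imCLM.hasFDerivAt.comp_hasDerivAt u (hS u))
    exact (hre.mul hre).add (him.mul him)
  have hgnn : ∀ u, 0 ≤ g u := by
    intro u
    have := mul_self_nonneg (S u).re
    have := mul_self_nonneg (S u).im
    simp only [hgdef]
    linarith
  have hgnormSq : ∀ u, g u = Complex.normSq (S u) := by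
    intro u
    rw [Complex.normSq_apply]
  -- pointwise bound on |gd|
  set c : ℝ := 2 * Real.pi * N + 1 with hcdef
  have hc : 0 < c := by positivity
  have hgdbd : ∀ u, |gd u| ≤ c * g u + c⁻¹ * Complex.normSq (D u) := by
    intro u
    have h1 : gd u = 2 * ((starRingEnd ℂ) (S u) * D u).re := by
      simp only [hgddef, Complex.mul_re, Complex.conj_re, Complex.conj_im]
      ring
    have h2 : |gd u| ≤ 2 * ‖S u‖ * ‖D u‖ := by
      rw [h1]
      rw [abs_mul, abs_two]
      have h3 : |((starRingEnd ℂ) (S u) * D u).re| ≤ ‖(starRingEnd ℂ) (S u) * D u‖ :=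
        Complex.abs_re_le_norm _
      rw [norm_mul, Complex.norm_conj] at h3
      nlinarith [norm_nonneg (S u), norm_nonneg (D u)]
    have h4 : 2 * ‖S u‖ * ‖D u‖
        ≤ c * (‖S u‖)^2 + c⁻¹ * (‖D u‖)^2 := by
      have hSnn := norm_nonneg (S u)
      have hDnn := norm_nonneg (D u)
      have key : 0 ≤ (c * ‖S u‖ - ‖D u‖)^2 := sq_nonneg _
      have hc' : 0 < c⁻¹ := inv_pos.mpr hc
      rw [← sub_nonneg]
      have expand : c * (‖S u‖)^2 + c⁻¹ * (‖D u‖)^2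
          - 2 * ‖S u‖ * ‖D u‖
          = c⁻¹ * (c * ‖S u‖ - ‖D u‖)^2 := by
        field_simp
        ring
      rw [expand]
      positivity
    calc |gd u| ≤ 2 * ‖S u‖ * ‖D u‖ := h2
      _ ≤ c * (‖S u‖)^2 + c⁻¹ * (‖D u‖)^2 := h4
      _ = c * g u + c⁻¹ * Complex.normSq (D u) := by
          rw [Complex.sq_norm, Complex.sq_norm, hgnormSq]
  -- Sobolev step
  have hone : ∀ t ∈ T, g t ≤ δ⁻¹ * (∫ u in (t-δ/2)..(t+δ/2), g u)
      + ∫ u in (t-δ/2)..(t+δ/2), |gd u| := by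
    intro t ht
    have h := sobolev hg' hgc hgdc (a := t - δ/2) (b := t + δ/2) (t := t)
      (by linarith) (by linarith) (by linarith)
    have : t + δ/2 - (t - δ/2) = δ := by ring
    rw [this] at h
    exact h
  have hsum : ∑ t ∈ T, g t ≤ δ⁻¹ * (∑ t ∈ T, ∫ u in (t-δ/2)..(t+δ/2), g u)
      + ∑ t ∈ T, ∫ u in (t-δ/2)..(t+δ/2), |gd u| := by
    rw [Finset.mul_sum, ← Finset.sum_add_distrib]
    exact Finset.sum_le_sum hone
  have hint1 : ∑ t ∈ T, (∫ u in (t-δ/2)..(t+δ/2), g u) ≤ ∫ u in (0:ℝ)..1, g u := by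
    apply sum_integral_le hgc hgnn T (δ/2) (by linarith)
    · exact hT1
    · intro t ht s hs hts
      have := hT2 t ht s hs hts
      linarith
  have hint2 : ∑ t ∈ T, (∫ u in (t-δ/2)..(t+δ/2), |gd u|) ≤ ∫ u in (0:ℝ)..1, |gd u| := by
    apply sum_integral_le hgdc.abs (fun u => abs_nonneg _) T (δ/2) (by linarith)
    · exact hT1
    · intro t ht s hs hts
      have := hT2 t ht s hs hts
      linarith
  -- Parseval for g
  have hP1 : (∫ u in (0:ℝ)..1, g u) = A.card := by
    have : (∫ u in (0:ℝ)..1, g u)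
        = ∫ u in (0:ℝ)..1, Complex.normSq (∑ n ∈ A, (1:ℂ) * ee (n:ℝ) u) := by
      apply intervalIntegral.integral_congr
      intro u _
      rw [hgnormSq]
      simp [hSdef]
    rw [this, L2_int]
    simp
  -- Parseval for D
  have hP2 : (∫ u in (0:ℝ)..1, Complex.normSq (D u)) = ∑ n ∈ A, Complex.normSq (cc (n:ℝ)) := by
    exact L2_int A (fun n => cc (n:ℝ))
  have hP2' : (∫ u in (0:ℝ)..1, Complex.normSq (D u)) ≤ (2*Real.pi*N)^2 * A.card := by
    rw [hP2]
    have hbd : ∀ n ∈ A, Complex.normSq (cc (n:ℝ)) ≤ (2*Real.pi*N)^2 := by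
      intro n hn
      rw [normSq_cc]
      have h1 : (n:ℝ) ≤ N := by exact_mod_cast hA n hn
      have h2 : (0:ℝ) ≤ n := Nat.cast_nonneg n
      apply pow_le_pow_left₀ (by positivity)
      nlinarith [Real.pi_pos]
    calc ∑ n ∈ A, Complex.normSq (cc (n:ℝ)) ≤ ∑ _n ∈ A, (2*Real.pi*N)^2 :=
        Finset.sum_le_sum hbd
      _ = (2*Real.pi*N)^2 * A.card := by rw [Finset.sum_const, nsmul_eq_mul]; ring
  -- integral of |gd|
  have hint3 : (∫ u in (0:ℝ)..1, |gd u|)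
      ≤ c * A.card + c⁻¹ * ((2*Real.pi*N)^2 * A.card) := by
    have hmono : (∫ u in (0:ℝ)..1, |gd u|)
        ≤ ∫ u in (0:ℝ)..1, (c * g u + c⁻¹ * Complex.normSq (D u)) := by
      apply intervalIntegral.integral_mono_on (by norm_num)
        (hgdc.abs.intervalIntegrable 0 1)
        (((continuous_const.mul hgc).add
          (continuous_const.mul (Complex.continuous_normSq.comp hDc))).intervalIntegrable 0 1)
      intro u _
      exact hgdbd u
    rw [intervalIntegral.integral_add (f := fun u => c * g u)
      (g := fun u => c⁻¹ * Complex.normSq (D u))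
      ((continuous_const.mul hgc).intervalIntegrable 0 1)
      ((continuous_const.mul (Complex.continuous_normSq.comp hDc)).intervalIntegrable 0 1)] at hmono
    rw [intervalIntegral.integral_const_mul, intervalIntegral.integral_const_mul] at hmono
    rw [hP1] at hmono
    have := hP2'
    have hc' : 0 ≤ c⁻¹ := (inv_pos.mpr hc).le
    nlinarith
  -- final assembly
  have hfinal : ∑ t ∈ T, g t ≤ δ⁻¹ * A.card + (c * A.card + c⁻¹ * ((2*Real.pi*N)^2 * A.card)) := by
    have hδinv : 0 ≤ δ⁻¹ := (inv_pos.mpr hδ).le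
    calc ∑ t ∈ T, g t ≤ δ⁻¹ * (∑ t ∈ T, ∫ u in (t-δ/2)..(t+δ/2), g u)
        + ∑ t ∈ T, ∫ u in (t-δ/2)..(t+δ/2), |gd u| := hsum
      _ ≤ δ⁻¹ * (∫ u in (0:ℝ)..1, g u) + ∫ u in (0:ℝ)..1, |gd u| := by
          have := mul_le_mul_of_nonneg_left hint1 hδinv
          linarith
      _ ≤ δ⁻¹ * A.card + (c * A.card + c⁻¹ * ((2*Real.pi*N)^2 * A.card)) := by
          rw [hP1]
          linarith
  have hcbd : c + c⁻¹ * (2*Real.pi*N)^2 ≤ 4*Real.pi*N + 1 := by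
    have hpiN : (0:ℝ) ≤ 2*Real.pi*N := by positivity
    have key : c⁻¹ * (2*Real.pi*N)^2 ≤ 2*Real.pi*N := by
      rw [inv_mul_le_iff₀ hc]
      nlinarith
    simp only [hcdef]
    linarith
  have hgoal : ∑ t ∈ T, Complex.normSq (∑ n ∈ A, ee (n:ℝ) t) = ∑ t ∈ T, g t := by
    refine Finset.sum_congr rfl fun t _ => ?_
    rw [hgnormSq]
  rw [hgoal]
  have hcard : (0:ℝ) ≤ A.card := Nat.cast_nonneg _
  calc ∑ t ∈ T, g t ≤ δ⁻¹ * A.card + (c * A.card + c⁻¹ * ((2*Real.pi*N)^2 * A.card)) := hfinal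
    _ = (δ⁻¹ + (c + c⁻¹ * (2*Real.pi*N)^2)) * A.card := by ring
    _ ≤ (δ⁻¹ + 4*Real.pi*N + 1) * A.card := by
        apply mul_le_mul_of_nonneg_right _ hcard
        linarith

/-- The finite set of primes `n` with `a < n ≤ b`. -/
noncomputable def primesIn (a b : ℝ) : Finset ℕ :=
  (Finset.Icc 1 ⌈b⌉₊).filter fun n => n.Prime ∧ a < (n : ℝ) ∧ (n : ℝ) ≤ b

lemma mem_primesIn {a b : ℝ} {n : ℕ} :
    n ∈ primesIn a b ↔ n.Prime ∧ a < (n:ℝ) ∧ (n : ℝ) ≤ b := by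
  simp only [primesIn, Finset.mem_filter, Finset.mem_Icc]
  constructor
  · rintro ⟨_, h⟩; exact h
  · rintro ⟨hp, ha, hb⟩
    refine ⟨⟨hp.one_lt.le, ?_⟩, hp, ha, hb⟩
    have h2 : (n:ℝ) ≤ (⌈b⌉₊ : ℝ) := hb.trans (Nat.le_ceil b)
    exact_mod_cast h2

lemma card_primesIn_le {x : ℝ} (hx : 1 ≤ x) :
    ((primesIn x (2*x)).card : ℝ) * Real.log x ≤ 3 * Real.log 4 * x := by
  set A := primesIn x (2*x) with hA
  have hx0 : (0:ℝ) < x := by linarith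
  have h1 : x ^ A.card ≤ ∏ p ∈ A, (p:ℝ) := by
    rw [← Finset.prod_const]
    apply Finset.prod_le_prod (fun _ _ => hx0.le)
    intro p hp
    exact (mem_primesIn.mp hp).2.1.le
  have h2 : (∏ p ∈ A, p) ≤ primorial ⌈2*x⌉₊ := by
    apply Finset.prod_le_prod_of_subset_of_one_le'
    · intro p hp
      rw [Finset.mem_filter, Finset.mem_range]
      refine ⟨?_, (mem_primesIn.mp hp).1⟩
      have h3 : (p:ℝ) ≤ 2*x := (mem_primesIn.mp hp).2.2
      have h4 : (p:ℝ) ≤ (⌈2*x⌉₊:ℝ) := h3.trans (Nat.le_ceil _)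
      have : p ≤ ⌈2*x⌉₊ := by exact_mod_cast h4
      omega
    · intro p hp _
      exact ((Finset.mem_filter.mp hp).2).one_lt.le
  have h3 : primorial ⌈2*x⌉₊ ≤ 4 ^ ⌈2*x⌉₊ := primorial_le_4_pow _
  have h4 : x ^ A.card ≤ (4:ℝ) ^ (3*x) := by
    calc x ^ A.card ≤ ∏ p ∈ A, (p:ℝ) := h1
      _ = ((∏ p ∈ A, p : ℕ) : ℝ) := by push_cast; rfl
      _ ≤ ((4 ^ ⌈2*x⌉₊ : ℕ) : ℝ) := by exact_mod_cast h2.trans h3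
      _ = (4:ℝ) ^ ((⌈2*x⌉₊ : ℕ) : ℝ) := by
          rw [Real.rpow_natCast]
          push_cast
          ring
      _ ≤ (4:ℝ) ^ (3*x) := by
          apply Real.rpow_le_rpow_of_exponent_le (by norm_num)
          have := Nat.ceil_lt_add_one (by positivity : (0:ℝ) ≤ 2*x)
          linarith
  have h5 : Real.log (x ^ A.card) ≤ Real.log ((4:ℝ) ^ (3*x)) :=
    Real.log_le_log (by positivity) h4
  rw [Real.log_pow, Real.log_rpow (by norm_num)] at h5
  calc ((A.card : ℝ)) * Real.log x = (A.card : ℕ) * Real.log x := by norm_num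
    _ ≤ 3*x * Real.log 4 := h5
    _ = 3 * Real.log 4 * x := by ring

lemma fiber_card_le {x : ℝ} (hx : 1 ≤ x) (r a : ℕ) (hr : 0 < r) :
    (((primesIn x (2*x)).filter fun n => n % r = a).card : ℝ) ≤ x / r + 3 := by
  set F := (primesIn x (2*x)).filter fun n => n % r = a with hF
  set l := (⌊x⌋₊ + 1)/r with hl
  set u := ⌈2*x⌉₊/r with hu
  have hcard : F.card ≤ (Finset.Icc l u).card := by
    apply Finset.card_le_card_of_injOn (fun n => n / r)
    · intro n hn
      rw [Finset.mem_coe, Finset.mem_filter] at hn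
      obtain ⟨hnp, _⟩ := hn
      rw [mem_primesIn] at hnp
      rw [Finset.mem_coe, Finset.mem_Icc]
      constructor
      · apply Nat.div_le_div_right
        have h1 : x < (n:ℝ) := hnp.2.1
        have h2 : (⌊x⌋₊ : ℝ) < n := by
          calc (⌊x⌋₊:ℝ) ≤ x := Nat.floor_le (by linarith)
            _ < n := h1
        have : ⌊x⌋₊ < n := by exact_mod_cast h2
        omega
      · apply Nat.div_le_div_right
        have h3 : (n:ℝ) ≤ (⌈2*x⌉₊ : ℝ) := hnp.2.2.trans (Nat.le_ceil _)
        exact_mod_cast h3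
    · intro m hm n hn hmn
      simp only [Finset.mem_coe, hF, Finset.mem_filter] at hm hn
      simp only at hmn
      calc m = r * (m/r) + m % r := (Nat.div_add_mod m r).symm
        _ = r * (n/r) + n % r := by rw [hmn, hm.2, hn.2]
        _ = n := Nat.div_add_mod n r
  have hr0 : (0:ℝ) < r := by exact_mod_cast hr
  have hIcc : ((Finset.Icc l u).card : ℝ) ≤ x / r + 3 := by
    rw [Nat.card_Icc]
    by_cases hlu : l ≤ u + 1
    · rw [Nat.cast_sub hlu]
      have hu' : (u:ℝ) ≤ (2*x+1) / r := by
        calc (u:ℝ) ≤ (⌈2*x⌉₊ : ℝ) / r := Nat.cast_div_le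
          _ ≤ (2*x+1)/r := by
            gcongr
            exact (Nat.ceil_lt_add_one (by positivity : (0:ℝ) ≤ 2*x)).le
      have hl' : x / r - 1 ≤ (l:ℝ) := by
        have hnat : ⌊x⌋₊ + 1 < r * (l + 1) := by
          rw [hl]
          have := Nat.lt_mul_div_succ (⌊x⌋₊ + 1) hr
          omega
        have hreal : x < ((l:ℝ) + 1) * r := by
          have h1 : x < (⌊x⌋₊:ℝ) + 1 := Nat.lt_floor_add_one x
          have h2 : ((⌊x⌋₊:ℕ) + 1 : ℝ) ≤ (r:ℝ) * ((l:ℝ) + 1) := by exact_mod_cast hnat.le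
          push_cast at h2
          nlinarith
        have := (div_lt_iff₀ hr0).mpr hreal
        linarith
      have h1r : (1:ℝ)/r ≤ 1 := by
        rw [div_le_one hr0]
        exact_mod_cast hr
      have hsplit : (2*x+1)/(r:ℝ) = x/(r:ℝ) + x/(r:ℝ) + 1/(r:ℝ) := by ring
      push_cast
      linarith
    · have h0 : u + 1 - l = 0 := by omega
      rw [h0]
      have : (0:ℝ) ≤ x / r + 3 := by positivity
      simpa using this
  calc (F.card : ℝ) ≤ ((Finset.Icc l u).card : ℝ) := by exact_mod_cast hcard
    _ ≤ x / r + 3 := hIcc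

lemma dvd_add_iff_mod {r : ℕ} (hr : 0 < r) (p q : ℕ) :
    (r ∣ p + q) ↔ p % r = (r - q % r) % r := by
  have hα : p % r < r := Nat.mod_lt p hr
  have hβ : q % r < r := Nat.mod_lt q hr
  have hmod : (p + q) % r = (p % r + q % r) % r := Nat.add_mod p q r
  rw [Nat.dvd_iff_mod_eq_zero, hmod]
  constructor
  · intro h
    have hcase : p % r + q % r = 0 ∨ p % r + q % r = r := by
      rcases Nat.lt_or_ge (p % r + q % r) r with h' | h'
      · left; rwa [Nat.mod_eq_of_lt h'] at h
      · right
        rw [Nat.mod_eq_sub_mod h'] at h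
        have h2 : p % r + q % r - r < r := by omega
        rw [Nat.mod_eq_of_lt h2] at h
        omega
    rcases hcase with h0 | h1
    · have hq0 : q % r = 0 := by omega
      rw [hq0, Nat.sub_zero, Nat.mod_self]
      omega
    · have hq : 0 < q % r := by omega
      rw [Nat.mod_eq_of_lt (by omega : r - q % r < r)]
      omega
  · intro h
    by_cases hb : q % r = 0
    · rw [hb, Nat.sub_zero, Nat.mod_self] at h
      rw [h, hb]
      simp
    · rw [Nat.mod_eq_of_lt (by omega : r - q % r < r)] at h
      have hsum : p % r + q % r = r := by omega
      rw [hsum, Nat.mod_self]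

lemma per_r (x : ℝ) (hx : 1 ≤ x) (r : ℕ) (hrp : r.Prime) :
    ∑ p1 ∈ primesIn x (2*x),
      ((((primesIn x (2*x)).filter fun p => r ∣ (p + p1)).card : ℝ)
        - (1/(r:ℝ)) * ((primesIn x (2*x)).card : ℝ))^2
    ≤ (x/(r:ℝ) + 3) * ((1/(r:ℝ)) * ∑ h ∈ Finset.Ico 1 r,
        Complex.normSq (∑ n ∈ primesIn x (2*x), ee (n:ℝ) ((h:ℝ)/r))) := by
  have hr : 0 < r := hrp.pos
  have hr0 : ((r:ℝ)) ≠ 0 := by exact_mod_cast hr.ne'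
  set A := primesIn x (2*x) with hAdef
  set Z := A.card with hZdef
  set N : ℕ → ℝ := fun a => ((A.filter fun n => n % r = a).card : ℝ) with hNdef
  set c : ℝ := (1/(r:ℝ)) * (Z:ℝ) with hcdef
  set σ : ℕ → ℕ := fun a => (r - a) % r with hσdef
  -- step A: rewrite terms
  have hterm : ∀ p1 ∈ A, ((A.filter fun p => r ∣ (p + p1)).card : ℝ) = N (σ (p1 % r)) := by
    intro p1 _
    congr 2
    apply Finset.filter_congr
    intro p _
    constructor
    · exact fun h => (dvd_add_iff_mod hr p p1).mp h
    · exact fun h => (dvd_add_iff_mod hr p p1).mpr h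
  have hsum1 : ∑ p1 ∈ A, ((((A.filter fun p => r ∣ (p + p1)).card : ℝ)) - c)^2
      = ∑ p1 ∈ A, (N (σ (p1 % r)) - c)^2 := by
    refine Finset.sum_congr rfl fun p1 hp1 => ?_
    rw [hterm p1 hp1]
  -- step B: fiberwise
  have hmaps : ∀ n ∈ A, n % r ∈ Finset.range r :=
    fun n _ => Finset.mem_range.mpr (Nat.mod_lt n hr)
  have hsum2 : ∑ p1 ∈ A, (N (σ (p1 % r)) - c)^2
      = ∑ a ∈ Finset.range r, N a * (N (σ a) - c)^2 := by
    rw [← Finset.sum_fiberwise_of_maps_to hmaps (fun p1 => (N (σ (p1 % r)) - c)^2)]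
    refine Finset.sum_congr rfl fun a _ => ?_
    have hfib : ∀ p1 ∈ A.filter (fun n => n % r = a),
        (N (σ (p1 % r)) - c)^2 = (N (σ a) - c)^2 := by
      intro p1 hp1
      rw [(Finset.mem_filter.mp hp1).2]
    rw [Finset.sum_congr rfl hfib, Finset.sum_const, nsmul_eq_mul]
  -- step C: bound N a by x/r+3
  have hNbd : ∀ a, N a ≤ x/(r:ℝ) + 3 := fun a => fiber_card_le hx r a hr
  have hsum3 : ∑ a ∈ Finset.range r, N a * (N (σ a) - c)^2
      ≤ (x/(r:ℝ) + 3) * ∑ a ∈ Finset.range r, (N (σ a) - c)^2 := by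
    rw [Finset.mul_sum]
    apply Finset.sum_le_sum
    intro a _
    exact mul_le_mul_of_nonneg_right (hNbd a) (sq_nonneg _)
  -- step D: reindex by σ
  have hσmem : ∀ a ∈ Finset.range r, σ a ∈ Finset.range r :=
    fun a _ => Finset.mem_range.mpr (Nat.mod_lt _ hr)
  have hσσ : ∀ a ∈ Finset.range r, σ (σ a) = a := by
    intro a ha
    rw [Finset.mem_range] at ha
    by_cases h0 : a = 0
    · simp [hσdef, h0, Nat.mod_self]
    · have h1 : (r - a) % r = r - a := Nat.mod_eq_of_lt (by omega)
      simp only [hσdef, h1]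
      rw [show r - (r - a) = a by omega, Nat.mod_eq_of_lt ha]
  have hsum4 : ∑ a ∈ Finset.range r, (N (σ a) - c)^2
      = ∑ a ∈ Finset.range r, (N a - c)^2 := by
    apply Finset.sum_nbij' (i := σ) (j := σ) hσmem hσmem hσσ hσσ
    intro a ha
    rfl
  -- step E: variance identity
  have hZsum : (Z:ℝ) = ∑ a ∈ Finset.range r, N a := by
    rw [hZdef, Finset.card_eq_sum_card_fiberwise hmaps]
    push_cast
    rfl
  have hsum5 : ∑ a ∈ Finset.range r, (N a - c)^2
      = (∑ a ∈ Finset.range r, (N a)^2) - (Z:ℝ)^2/r := by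
    have hexp : ∀ a ∈ Finset.range r, (N a - c)^2 = (N a)^2 - 2*c*(N a) + c^2 :=
      fun a _ => by ring
    rw [Finset.sum_congr rfl hexp]
    rw [Finset.sum_add_distrib, Finset.sum_sub_distrib, ← Finset.mul_sum,
      Finset.sum_const, Finset.card_range, ← hZsum, nsmul_eq_mul, hcdef]
    field_simp
    ring
  -- step F,G: discrete parseval and removing h = 0
  have hpars := disc_parseval A r hr
  have hzero : Complex.normSq (∑ n ∈ A, ee (n:ℝ) (((0:ℕ):ℝ)/r)) = (Z:ℝ)^2 := by
    have h1 : ∀ n ∈ A, ee (n:ℝ) (((0:ℕ):ℝ)/r) = 1 := by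
      intro n _
      rw [show ((0:ℕ):ℝ)/(r:ℝ) = 0 by simp]
      exact ee_zero _
    rw [Finset.sum_congr rfl h1, Finset.sum_const, nsmul_eq_mul, mul_one]
    rw [Complex.normSq_natCast]
    push_cast
    ring
  have hsplit : ∑ h ∈ Finset.range r, Complex.normSq (∑ n ∈ A, ee (n:ℝ) ((h:ℝ)/r))
      = (Z:ℝ)^2 + ∑ h ∈ Finset.Ico 1 r, Complex.normSq (∑ n ∈ A, ee (n:ℝ) ((h:ℝ)/r)) := by
    rw [Finset.range_eq_Ico, Finset.sum_eq_sum_Ico_succ_bot hr]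
    rw [hzero]
  have hsum6 : (∑ a ∈ Finset.range r, (N a)^2) - (Z:ℝ)^2/r
      = (1/(r:ℝ)) * ∑ h ∈ Finset.Ico 1 r,
          Complex.normSq (∑ n ∈ A, ee (n:ℝ) ((h:ℝ)/r)) := by
    have h1 : (∑ a ∈ Finset.range r, (N a)^2)
        = (1/(r:ℝ)) * ∑ h ∈ Finset.range r, Complex.normSq (∑ n ∈ A, ee (n:ℝ) ((h:ℝ)/r)) := by
      rw [hpars, ← mul_assoc, one_div_mul_cancel hr0, one_mul]
    rw [h1, hsplit]
    ring
  calc ∑ p1 ∈ A, ((((A.filter fun p => r ∣ (p + p1)).card : ℝ)) - c)^2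
      = ∑ a ∈ Finset.range r, N a * (N (σ a) - c)^2 := by rw [hsum1, hsum2]
    _ ≤ (x/(r:ℝ) + 3) * ∑ a ∈ Finset.range r, (N (σ a) - c)^2 := hsum3
    _ = (x/(r:ℝ) + 3) * ((1/(r:ℝ)) * ∑ h ∈ Finset.Ico 1 r,
          Complex.normSq (∑ n ∈ A, ee (n:ℝ) ((h:ℝ)/r))) := by
        rw [hsum4, hsum5, hsum6]

set_option maxHeartbeats 2000000 in
theorem stmt_4 :
    ∃ C : ℝ, 0 < C ∧ ∃ x0 : ℝ, ∀ x : ℝ, x0 ≤ x →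
      ∑ r ∈ primesIn (Real.sqrt x * Real.log x) (2 * Real.sqrt x * Real.log x),
        ∑ p1 ∈ primesIn x (2 * x),
          ((((primesIn x (2 * x)).filter fun p => r ∣ (p + p1)).card : ℝ)
            - (1 / (r : ℝ)) * ((primesIn x (2 * x)).card : ℝ)) ^ 2
      ≤ C * x ^ 2 / Real.log x := by
  refine ⟨50, by norm_num, 20736, fun x hx => ?_⟩
  have hx1 : (1:ℝ) ≤ x := by linarith
  have hx0 : (0:ℝ) < x := by linarith
  set s := Real.sqrt x with hsdef
  set L := Real.log x with hLdef
  have hs0 : 0 < s := Real.sqrt_pos.mpr hx0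
  have hss : s * s = x := Real.mul_self_sqrt hx0.le
  have hs144 : 144 ≤ s := by
    rw [hsdef]
    rw [show (144:ℝ) = Real.sqrt (144^2) by rw [Real.sqrt_sq]; norm_num]
    apply Real.sqrt_le_sqrt
    norm_num
    linarith
  have hL7 : 7 ≤ L := by
    rw [hLdef, Real.le_log_iff_exp_le hx0]
    have h1 : Real.exp 7 = (Real.exp 1)^(7:ℕ) := by
      rw [← Real.exp_nat_mul]; norm_num
    rw [h1]
    have h2 : (Real.exp 1)^(7:ℕ) ≤ (2.7182818286:ℝ)^(7:ℕ) := by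
      apply pow_le_pow_left₀ (Real.exp_pos 1).le Real.exp_one_lt_d9.le
    calc (Real.exp 1)^(7:ℕ) ≤ (2.7182818286:ℝ)^(7:ℕ) := h2
      _ ≤ 20736 := by norm_num
      _ ≤ x := hx
  have hL0 : 0 < L := by linarith
  have h3L : 3 * L ≤ s := by
    set q := Real.sqrt s with hqdef
    have hq0 : 0 < q := Real.sqrt_pos.mpr hs0
    have hqq : q * q = s := Real.mul_self_sqrt hs0.le
    have hq12 : 12 ≤ q := by
      rw [hqdef, show (12:ℝ) = Real.sqrt (12^2) by rw [Real.sqrt_sq]; norm_num]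
      apply Real.sqrt_le_sqrt
      norm_num
      linarith
    have hlogq : Real.log q ≤ q := by
      have := Real.log_le_sub_one_of_pos hq0
      linarith
    have hL4 : L = 4 * Real.log q := by
      rw [hLdef, ← hss, ← hqq]
      rw [Real.log_mul (by positivity) (by positivity), Real.log_mul (by positivity) (by positivity)]
      ring
    calc 3 * L = 12 * Real.log q := by rw [hL4]; ring
      _ ≤ 12 * q := by linarith
      _ ≤ q * q := by nlinarith
      _ = s := hqq
  set R := s * L with hRdef
  have hR0 : 0 < R := by positivity
  have hR1 : 1 ≤ R := by nlinarith
  set P := primesIn (s * L) (2 * s * L) with hPdef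
  set A := primesIn x (2 * x) with hAdef
  set Z := A.card with hZdef
  -- facts about members of P
  have hPmem : ∀ r ∈ P, r.Prime ∧ R < (r:ℝ) ∧ (r:ℝ) ≤ 2*R := by
    intro r hr
    rw [hPdef, mem_primesIn] at hr
    exact ⟨hr.1, hr.2.1, by rw [hRdef]; linarith [hr.2.2]⟩
  -- step 1: apply per_r to each r
  have hstep1 : ∀ r ∈ P,
      ∑ p1 ∈ A, (((A.filter fun p => r ∣ (p + p1)).card : ℝ) - (1/(r:ℝ)) * (Z:ℝ))^2
      ≤ (2*s/L) * ((1/R) * ∑ h ∈ Finset.Ico 1 r,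
          Complex.normSq (∑ n ∈ A, ee (n:ℝ) ((h:ℝ)/r))) := by
    intro r hr
    obtain ⟨hrp, hrR, hr2R⟩ := hPmem r hr
    have hrpos : (0:ℝ) < r := lt_trans hR0 hrR
    have hW : 0 ≤ ∑ h ∈ Finset.Ico 1 r, Complex.normSq (∑ n ∈ A, ee (n:ℝ) ((h:ℝ)/r)) :=
      Finset.sum_nonneg fun h _ => Complex.normSq_nonneg _
    calc ∑ p1 ∈ A, (((A.filter fun p => r ∣ (p + p1)).card : ℝ) - (1/(r:ℝ)) * (Z:ℝ))^2
        ≤ (x/(r:ℝ) + 3) * ((1/(r:ℝ)) * ∑ h ∈ Finset.Ico 1 r,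
            Complex.normSq (∑ n ∈ A, ee (n:ℝ) ((h:ℝ)/r))) := per_r x hx1 r hrp
      _ ≤ (2*s/L) * ((1/R) * ∑ h ∈ Finset.Ico 1 r,
            Complex.normSq (∑ n ∈ A, ee (n:ℝ) ((h:ℝ)/r))) := by
          apply mul_le_mul
          · have h1 : x/(r:ℝ) ≤ x/R := by
              apply div_le_div_of_nonneg_left hx0.le hR0 hrR.le
            have h2 : x/R = s/L := by
              rw [hRdef, ← hss]
              rw [mul_div_mul_left _ _ hs0.ne']
            have h3 : (3:ℝ) ≤ s/L := by
              rw [le_div_iff₀ hL0]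
              linarith
            have : x/(r:ℝ) + 3 ≤ s/L + s/L := by
              rw [← h2]; linarith
            calc x/(r:ℝ) + 3 ≤ s/L + s/L := this
              _ = 2*s/L := by ring
          · apply mul_le_mul_of_nonneg_right _ hW
            apply div_le_div_of_nonneg_left (by norm_num) hR0 hrR.le
          · positivity
          · positivity
  have hstep2 : ∑ r ∈ P, ∑ p1 ∈ A,
      (((A.filter fun p => r ∣ (p + p1)).card : ℝ) - (1/(r:ℝ)) * (Z:ℝ))^2
      ≤ (2*s/L) * ((1/R) * ∑ r ∈ P, ∑ h ∈ Finset.Ico 1 r,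
          Complex.normSq (∑ n ∈ A, ee (n:ℝ) ((h:ℝ)/r))) := by
    calc ∑ r ∈ P, ∑ p1 ∈ A,
        (((A.filter fun p => r ∣ (p + p1)).card : ℝ) - (1/(r:ℝ)) * (Z:ℝ))^2
        ≤ ∑ r ∈ P, (2*s/L) * ((1/R) * ∑ h ∈ Finset.Ico 1 r,
            Complex.normSq (∑ n ∈ A, ee (n:ℝ) ((h:ℝ)/r))) := Finset.sum_le_sum hstep1
      _ = (2*s/L) * ((1/R) * ∑ r ∈ P, ∑ h ∈ Finset.Ico 1 r,
            Complex.normSq (∑ n ∈ A, ee (n:ℝ) ((h:ℝ)/r))) := by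
          rw [Finset.mul_sum, Finset.mul_sum]
  -- Farey points
  set Q := P.sigma (fun r => Finset.Ico 1 r) with hQdef
  have hinj : ∀ q1 ∈ Q, ∀ q2 ∈ Q,
      ((q1.2 : ℝ) / (q1.1 : ℝ)) = ((q2.2 : ℝ) / (q2.1 : ℝ)) → q1 = q2 := by
    rintro ⟨r, h⟩ hq1 ⟨r', h'⟩ hq2 heq
    rw [hQdef, Finset.mem_sigma] at hq1 hq2
    obtain ⟨hr, hh⟩ := hq1
    obtain ⟨hr', hh'⟩ := hq2
    rw [Finset.mem_Ico] at hh hh'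
    obtain ⟨hrp, hrR, -⟩ := hPmem _ hr
    obtain ⟨hrp', hrR', -⟩ := hPmem _ hr'
    have hrpos : (0:ℝ) < r := lt_trans hR0 hrR
    have hrpos' : (0:ℝ) < r' := lt_trans hR0 hrR'
    simp only at heq
    have hcross : (h : ℝ) * r' = (h' : ℝ) * r := by
      rw [div_eq_div_iff hrpos.ne' hrpos'.ne'] at heq
      linarith
    have hcrossn : h * r' = h' * r := by exact_mod_cast hcross
    by_cases hrr : r = r'
    · subst hrr
      have hhh : h = h' := by
        exact Nat.eq_of_mul_eq_mul_right hrp.pos hcrossn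
      simp [hhh]
    · exfalso
      have hdvd : r ∣ h * r' := ⟨h', by rw [hcrossn, Nat.mul_comm]⟩
      rcases (Nat.Prime.dvd_mul hrp).mp hdvd with hd | hd
      · have hle : r ≤ h := Nat.le_of_dvd hh.1 hd
        exact absurd hh.2 (not_lt.mpr hle)
      · exact hrr ((Nat.prime_dvd_prime_iff_eq hrp hrp').mp hd)
  set T := Q.image (fun q : (Σ _ : ℕ, ℕ) => (q.2 : ℝ) / (q.1 : ℝ)) with hTdef
  have hsumT : ∑ r ∈ P, ∑ h ∈ Finset.Ico 1 r,
      Complex.normSq (∑ n ∈ A, ee (n:ℝ) ((h:ℝ)/r))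
      = ∑ t ∈ T, Complex.normSq (∑ n ∈ A, ee (n:ℝ) t) := by
    rw [hTdef, Finset.sum_image hinj, hQdef, Finset.sum_sigma]
  set δ : ℝ := 1/(4*R^2) with hδdef
  have hδ : 0 < δ := by positivity
  have hδ2R : δ ≤ 1/(2*R) := by
    rw [hδdef]
    apply one_div_le_one_div_of_le (by positivity)
    nlinarith
  have hT1 : ∀ t ∈ T, δ/2 ≤ t ∧ t + δ/2 ≤ 1 := by
    intro t ht
    obtain ⟨⟨r, h⟩, hq, rfl⟩ := Finset.mem_image.mp ht
    rw [hQdef, Finset.mem_sigma] at hq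
    obtain ⟨hr, hh⟩ := hq
    rw [Finset.mem_Ico] at hh
    obtain ⟨hrp, hrR, hr2R⟩ := hPmem _ hr
    have hrpos : (0:ℝ) < r := lt_trans hR0 hrR
    have h2R : 1/(2*R) ≤ 1/(r:ℝ) := one_div_le_one_div_of_le hrpos hr2R
    have hlow : 1/(r:ℝ) ≤ (h:ℝ)/r := by
      gcongr
      exact_mod_cast hh.1
    have hup : (h:ℝ)/r ≤ 1 - 1/(r:ℝ) := by
      rw [div_le_iff₀ hrpos]
      have hc : (h:ℝ) + 1 ≤ r := by exact_mod_cast hh.2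
      have hid : ((1:ℝ) - 1/(r:ℝ))*r = r - 1 := by field_simp
      linarith
    constructor
    · calc δ/2 ≤ δ := by linarith
        _ ≤ 1/(2*R) := hδ2R
        _ ≤ 1/(r:ℝ) := h2R
        _ ≤ (h:ℝ)/r := hlow
    · have : δ/2 ≤ 1/(r:ℝ) := by linarith [hδ2R.trans h2R]
      simp only
      linarith
  have hT2 : ∀ t ∈ T, ∀ t' ∈ T, t ≠ t' → δ ≤ |t - t'| := by
    intro t ht t' ht' htt
    obtain ⟨⟨r, h⟩, hq, rfl⟩ := Finset.mem_image.mp ht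
    obtain ⟨⟨r', h'⟩, hq', rfl⟩ := Finset.mem_image.mp ht'
    rw [hQdef, Finset.mem_sigma] at hq hq'
    obtain ⟨hr, hh⟩ := hq
    obtain ⟨hr', hh'⟩ := hq'
    obtain ⟨hrp, hrR, hr2R⟩ := hPmem _ hr
    obtain ⟨hrp', hrR', hr2R'⟩ := hPmem _ hr'
    have hrpos : (0:ℝ) < r := lt_trans hR0 hrR
    have hrpos' : (0:ℝ) < r' := lt_trans hR0 hrR'
    simp only at htt ⊢
    set q : ℤ := (h:ℤ) * r' - (h':ℤ) * r with hqdef2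
    have hq0 : q ≠ 0 := by
      intro hq00
      apply htt
      have : (h:ℝ) * r' = (h':ℝ) * r := by
        have : ((h:ℤ) * r' : ℤ) = ((h':ℤ) * r : ℤ) := by omega
        exact_mod_cast this
      rw [div_eq_div_iff hrpos.ne' hrpos'.ne']
      linarith
    have hident : (h:ℝ)/r - (h':ℝ)/r' = (q:ℝ)/((r:ℝ)*r') := by
      rw [hqdef2]
      push_cast
      field_simp
    have h1q : (1:ℝ) ≤ |(q:ℝ)| := by
      have := Int.one_le_abs hq0
      calc (1:ℝ) = ((1:ℤ):ℝ) := by norm_num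
        _ ≤ ((|q|:ℤ):ℝ) := by exact_mod_cast this
        _ = |(q:ℝ)| := by push_cast; rfl
    have hrr4R : (r:ℝ)*r' ≤ 4*R^2 := by nlinarith
    calc δ = 1/(4*R^2) := hδdef
      _ ≤ 1/((r:ℝ)*r') := one_div_le_one_div_of_le (by positivity) hrr4R
      _ ≤ |(q:ℝ)|/((r:ℝ)*r') := by
          apply div_le_div_of_nonneg_right h1q (by positivity) |>.trans_eq rfl
      _ = |(q:ℝ)/((r:ℝ)*r')| := by
          rw [abs_div, abs_of_pos (by positivity : (0:ℝ) < (r:ℝ)*r')]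
      _ = |(h:ℝ)/r - (h':ℝ)/r'| := by rw [hident]
  have hAN : ∀ n ∈ A, n ≤ ⌈2*x⌉₊ := by
    intro n hn
    rw [hAdef, primesIn, Finset.mem_filter, Finset.mem_Icc] at hn
    exact hn.1.2
  have hgal := gallagher A ⌈2*x⌉₊ hAN T δ hδ hT1 hT2
  have hδinv : δ⁻¹ = 4*R^2 := by
    rw [hδdef, one_div, inv_inv]
  have hceil : ((⌈2*x⌉₊:ℕ):ℝ) ≤ 2*x + 1 := (Nat.ceil_lt_add_one (by positivity)).le
  have hL2 : 49 ≤ L^2 := by nlinarith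
  have hR2 : R^2 = x * L^2 := by
    rw [hRdef]
    nlinarith [hss]
  have hcoef : δ⁻¹ + 4*Real.pi*(⌈2*x⌉₊:ℕ) + 1 ≤ 5*x*L^2 := by
    rw [hδinv, hR2]
    have hpi : Real.pi < 3.15 := Real.pi_lt_d2
    have hpi0 : 0 < Real.pi := Real.pi_pos
    have hceilnn : (0:ℝ) ≤ ((⌈2*x⌉₊:ℕ):ℝ) := Nat.cast_nonneg _
    nlinarith [mul_le_mul hpi.le hceil hceilnn (by norm_num : (0:ℝ) ≤ 3.15)]
  have hGbound : ∑ t ∈ T, Complex.normSq (∑ n ∈ A, ee (n:ℝ) t) ≤ 5*x*L^2 * Z := by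
    calc ∑ t ∈ T, Complex.normSq (∑ n ∈ A, ee (n:ℝ) t)
        ≤ (δ⁻¹ + 4*Real.pi*(⌈2*x⌉₊:ℕ) + 1) * A.card := hgal
      _ ≤ 5*x*L^2 * Z := by
          apply mul_le_mul_of_nonneg_right hcoef (Nat.cast_nonneg _)
  have hZ5 : (Z:ℝ) * L ≤ 5 * x := by
    have h1 := card_primesIn_le (x := x) hx1
    have hlog4 : Real.log 4 = 2 * Real.log 2 := by
      rw [show (4:ℝ) = 2^2 by norm_num, Real.log_pow]
      push_cast
      ring
    have hlog2 : Real.log 2 < 0.6931471808 := Real.log_two_lt_d9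
    have hlog2p : 0 < Real.log 2 := Real.log_pos (by norm_num)
    rw [hAdef] at hZdef
    rw [hLdef]
    calc (Z:ℝ) * Real.log x ≤ 3 * Real.log 4 * x := by rw [hZdef]; exact h1
      _ ≤ 5 * x := by rw [hlog4]; nlinarith
  -- final assembly
  have hG0 : 0 ≤ ∑ t ∈ T, Complex.normSq (∑ n ∈ A, ee (n:ℝ) t) :=
    Finset.sum_nonneg fun t _ => Complex.normSq_nonneg _
  calc ∑ r ∈ P, ∑ p1 ∈ A,
      (((A.filter fun p => r ∣ (p + p1)).card : ℝ) - (1/(r:ℝ)) * (Z:ℝ))^2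
      ≤ (2*s/L) * ((1/R) * ∑ r ∈ P, ∑ h ∈ Finset.Ico 1 r,
          Complex.normSq (∑ n ∈ A, ee (n:ℝ) ((h:ℝ)/r))) := hstep2
    _ = (2*s/L) * ((1/R) * ∑ t ∈ T, Complex.normSq (∑ n ∈ A, ee (n:ℝ) t)) := by
        rw [hsumT]
    _ ≤ (2*s/L) * ((1/R) * (5*x*L^2 * Z)) := by
        apply mul_le_mul_of_nonneg_left _ (by positivity)
        apply mul_le_mul_of_nonneg_left hGbound (by positivity)
    _ = 10 * x * Z := by
        rw [hRdef]
        field_simp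
        nlinarith [hss]
    _ ≤ 50 * x^2 / L := by
        rw [le_div_iff₀ hL0]
        nlinarith [hZ5, (Nat.cast_nonneg Z : (0:ℝ) ≤ (Z:ℝ))]
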